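/- Angular eigenvalue estimate in the upper half-plane (Proposition 2.1, statement 1(b)): Fix s ∈ ℝ, m ∈ ℝ, ν ∈ ℂ with Im ν > 0, and λ ∈ ℂ. Suppose S : (0, π) → ℂ is a twice continuously differentiable solution of the angular Teukolsky ODE with spin s which is not identically zero and satisfies: ∫₀^π |S|² sin θ dθ < ∞, ∫₀^π |S′|² sin θ dθ < ∞, ∫₀^π (m + s cos θ)² |S|² / sin θ dθ < ∞, and sin θ · S′(θ) · conj(S(θ)) → 0 as θ → 0⁺ and as θ → π⁻. Then Im(conj(ν) · λ) < 0. -/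

import Mathlib

open Real Complex Filter Set MeasureTheory

noncomputable section

/-- The angular Teukolsky ODE with spin `s`:
`−(1/sin θ)(d/dθ)(sin θ dS/dθ) + [(m + s cos θ)²/sin²θ − ν² cos²θ + 2νs cos θ] S = λ S`
on `(0, π)`. -/
def AngularTeukolskyODE (s m : ℝ) (ν lam : ℂ) (S : ℝ → ℂ) : Prop :=
  ∀ θ : ℝ, 0 < θ → θ < π →
    -(1 / (Real.sin θ : ℂ)) * deriv (fun θ' : ℝ => (Real.sin θ' : ℂ) * deriv S θ') θ
      + ((((m + s * Real.cos θ) ^ 2 / Real.sin θ ^ 2 : ℝ) : ℂ)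
          - ν ^ 2 * (Real.cos θ : ℂ) ^ 2 + 2 * ν * (s : ℂ) * (Real.cos θ : ℂ)) * S θ
      = lam * S θ

set_option maxHeartbeats 2000000 in
/-- **Angular eigenvalue estimate in the upper half-plane** (Proposition 2.1, 1(b)):
if `Im ν > 0` and `S` is a nontrivial twice continuously differentiable solution of the
angular Teukolsky ODE on `(0, π)` with finite weighted `L²`, derivative and potential
integrals and vanishing boundary flux, then `Im(conj(ν)·λ) < 0`. -/
theorem angular_eigenvalue_upper_half_plane
    (s m : ℝ) (ν lam : ℂ) (hν : 0 < ν.im)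
    (S : ℝ → ℂ) (hS : ContDiffOn ℝ 2 S (Set.Ioo 0 π))
    (hODE : AngularTeukolskyODE s m ν lam S)
    (hne : ∃ θ ∈ Set.Ioo (0 : ℝ) π, S θ ≠ 0)
    (hL2 : IntegrableOn (fun θ : ℝ => ‖S θ‖ ^ 2 * Real.sin θ) (Set.Ioo 0 π))
    (hL2' : IntegrableOn (fun θ : ℝ => ‖deriv S θ‖ ^ 2 * Real.sin θ)
      (Set.Ioo 0 π))
    (hpot : IntegrableOn
      (fun θ : ℝ => (m + s * Real.cos θ) ^ 2 * ‖S θ‖ ^ 2 / Real.sin θ)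
      (Set.Ioo 0 π))
    (hb0 : Tendsto (fun θ : ℝ => (Real.sin θ : ℂ) * deriv S θ * (starRingEnd ℂ) (S θ))
      (nhdsWithin 0 (Set.Ioi 0)) (nhds 0))
    (hbπ : Tendsto (fun θ : ℝ => (Real.sin θ : ℂ) * deriv S θ * (starRingEnd ℂ) (S θ))
      (nhdsWithin π (Set.Iio π)) (nhds 0)) :
    ((starRingEnd ℂ) ν * lam).im < 0 := by
  have hπ : (0:ℝ) < π := Real.pi_pos
  -- basic regularity
  have hSc : ContinuousOn S (Set.Ioo 0 π) := hS.continuousOn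
  have hS1 : ContDiffOn ℝ 1 (deriv S) (Set.Ioo 0 π) :=
    hS.deriv_of_isOpen (m := 1) isOpen_Ioo (by norm_num)
  have hS'c : ContinuousOn (deriv S) (Set.Ioo 0 π) := hS1.continuousOn
  have hdiffS : ∀ θ ∈ Set.Ioo (0:ℝ) π, DifferentiableAt ℝ S θ := fun θ hθ =>
    ((hS.differentiableOn (by norm_num)) θ hθ).differentiableAt (isOpen_Ioo.mem_nhds hθ)
  have hdiffS' : ∀ θ ∈ Set.Ioo (0:ℝ) π, DifferentiableAt ℝ (deriv S) θ := fun θ hθ =>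
    ((hS1.differentiableOn (by norm_num)) θ hθ).differentiableAt (isOpen_Ioo.mem_nhds hθ)
  -- the potential and the flux
  set V : ℝ → ℂ := fun θ => (((m + s * Real.cos θ) ^ 2 / Real.sin θ ^ 2 : ℝ) : ℂ)
      - ν ^ 2 * (Real.cos θ : ℂ) ^ 2 + 2 * ν * (s : ℂ) * (Real.cos θ : ℂ) with hV
  set F : ℝ → ℂ := fun θ => (Real.sin θ : ℂ) * deriv S θ * (starRingEnd ℂ) (S θ) with hF
  set g : ℝ → ℂ := fun θ =>
      (Real.sin θ : ℂ) * (V θ - lam) * (S θ * (starRingEnd ℂ) (S θ))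
        + (Real.sin θ : ℂ) * (deriv S θ * (starRingEnd ℂ) (deriv S θ)) with hg
  -- the flux has derivative g on (0,π)
  have hFderiv : ∀ θ ∈ Set.Ioo (0:ℝ) π, HasDerivAt F (g θ) θ := by
    intro θ hθ
    have hsθ : Real.sin θ ≠ 0 := (Real.sin_pos_of_pos_of_lt_pi hθ.1 hθ.2).ne'
    have hsθ' : (Real.sin θ : ℂ) ≠ 0 := Complex.ofReal_ne_zero.mpr hsθ
    have h1 : HasDerivAt (fun x : ℝ => (Real.sin x : ℂ)) ((Real.cos θ : ℂ)) θ :=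
      (Real.hasDerivAt_sin θ).ofReal_comp
    have h2 : HasDerivAt (deriv S) (deriv (deriv S) θ) θ := (hdiffS' θ hθ).hasDerivAt
    have hGd : DifferentiableAt ℝ (fun x : ℝ => (Real.sin x : ℂ) * deriv S x) θ :=
      (h1.mul h2).differentiableAt
    have hG : HasDerivAt (fun x : ℝ => (Real.sin x : ℂ) * deriv S x)
        (deriv (fun x : ℝ => (Real.sin x : ℂ) * deriv S x) θ) θ := hGd.hasDerivAt
    have hconj : HasDerivAt (fun x : ℝ => (starRingEnd ℂ) (S x))
        ((starRingEnd ℂ) (deriv S θ)) θ := by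
      simpa only [RCLike.star_def] using ((hdiffS θ hθ).hasDerivAt).star
    have hFθ : HasDerivAt F
        (deriv (fun x : ℝ => (Real.sin x : ℂ) * deriv S x) θ * (starRingEnd ℂ) (S θ)
          + ((Real.sin θ : ℂ) * deriv S θ) * (starRingEnd ℂ) (deriv S θ)) θ := by
      simpa [hF, mul_assoc, Pi.mul_def] using hG.mul hconj
    have hode := hODE θ hθ.1 hθ.2
    have hderivG : deriv (fun x : ℝ => (Real.sin x : ℂ) * deriv S x) θ
        = (Real.sin θ : ℂ) * (V θ - lam) * S θ := by
      have h : -(1 / (Real.sin θ : ℂ)) * deriv (fun θ' : ℝ => (Real.sin θ' : ℂ) * deriv S θ') θ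
          + V θ * S θ = lam * S θ := hode
      set t : ℂ := (Real.sin θ : ℂ) with ht
      set dG : ℂ := deriv (fun θ' : ℝ => (Real.sin θ' : ℂ) * deriv S θ') θ with hdG
      have h2 : dG = t * (V θ * S θ) - t * (lam * S θ) := by
        have h3 : (1 / t) * dG = V θ * S θ - lam * S θ := by linear_combination -h
        calc dG = t * ((1/t) * dG) := by field_simp
          _ = t * (V θ * S θ - lam * S θ) := by rw [h3]
          _ = t * (V θ * S θ) - t * (lam * S θ) := by ring
      rw [h2]; ring
    rw [hderivG] at hFθ
    convert hFθ using 1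
    simp only [hg]
    ring
  -- continuity of g on (0,π)
  have hVcont : ContinuousOn V (Set.Ioo 0 π) := by
    apply ContinuousOn.add
    apply ContinuousOn.sub
    · apply Complex.continuous_ofReal.comp_continuousOn
      apply ContinuousOn.div
      · fun_prop
      · fun_prop
      · intro θ hθ
        exact pow_ne_zero 2 (Real.sin_pos_of_pos_of_lt_pi hθ.1 hθ.2).ne'
    · fun_prop
    · fun_prop
  have hgcont : ContinuousOn g (Set.Ioo 0 π) := by
    apply ContinuousOn.add
    · exact (((Complex.continuous_ofReal.comp Real.continuous_sin).continuousOn.mul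
        (hVcont.sub continuousOn_const)).mul
        (hSc.mul (continuous_star.comp_continuousOn hSc)))
    · exact (Complex.continuous_ofReal.comp Real.continuous_sin).continuousOn.mul
        (hS'c.mul (continuous_star.comp_continuousOn hS'c))
  -- real component functions
  set f1 : ℝ → ℝ := fun θ => ‖deriv S θ‖ ^ 2 * Real.sin θ with hf1
  set f2 : ℝ → ℝ := fun θ => (m + s * Real.cos θ) ^ 2 * ‖S θ‖ ^ 2 / Real.sin θ
    with hf2
  set f5 : ℝ → ℝ := fun θ => ‖S θ‖ ^ 2 * Real.sin θ with hf5
  set f3 : ℝ → ℝ := fun θ => Real.cos θ ^ 2 * f5 θ with hf3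
  set f4 : ℝ → ℝ := fun θ => Real.cos θ * f5 θ with hf4
  have hf5nonneg : ∀ θ ∈ Set.Ioo (0:ℝ) π, 0 ≤ f5 θ := fun θ hθ =>
    mul_nonneg (sq_nonneg _) (Real.sin_pos_of_pos_of_lt_pi hθ.1 hθ.2).le
  have hf3i : IntegrableOn f3 (Set.Ioo 0 π) := by
    apply Integrable.mono' hL2
      ((Real.continuous_cos.pow 2).aestronglyMeasurable.mul hL2.aestronglyMeasurable)
    filter_upwards [ae_restrict_mem measurableSet_Ioo] with θ hθ
    have h1 : Real.cos θ ^ 2 ≤ 1 := by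
      nlinarith [Real.neg_one_le_cos θ, Real.cos_le_one θ]
    have h2 := hf5nonneg θ hθ
    calc ‖f3 θ‖ = Real.cos θ ^ 2 * f5 θ := by
          rw [Real.norm_eq_abs, hf3, _root_.abs_of_nonneg (mul_nonneg (sq_nonneg _) h2)]
      _ ≤ 1 * f5 θ := mul_le_mul_of_nonneg_right h1 h2
      _ = f5 θ := one_mul _
  have hf4i : IntegrableOn f4 (Set.Ioo 0 π) := by
    apply Integrable.mono' hL2
      (Real.continuous_cos.aestronglyMeasurable.mul hL2.aestronglyMeasurable)
    filter_upwards [ae_restrict_mem measurableSet_Ioo] with θ hθ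
    have h1 : |Real.cos θ| ≤ 1 := Real.abs_cos_le_one θ
    have h2 := hf5nonneg θ hθ
    calc ‖f4 θ‖ = |Real.cos θ| * f5 θ := by
          rw [Real.norm_eq_abs, hf4, abs_mul, _root_.abs_of_nonneg h2]
      _ ≤ 1 * f5 θ := mul_le_mul_of_nonneg_right h1 h2
      _ = f5 θ := one_mul _
  -- g agrees a.e. on (0,π) with the sum decomposition
  have hgae : g =ᵐ[volume.restrict (Set.Ioo 0 π)] fun θ =>
      (f1 θ : ℂ) + (f2 θ : ℂ) + (-ν^2) * (f3 θ : ℂ) + (2*ν*s) * (f4 θ : ℂ)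
        + (-lam) * (f5 θ : ℂ) := by
    filter_upwards [ae_restrict_mem measurableSet_Ioo] with θ hθ
    have hsθ : Real.sin θ ≠ 0 := (Real.sin_pos_of_pos_of_lt_pi hθ.1 hθ.2).ne'
    have e1 : S θ * (starRingEnd ℂ) (S θ) = ((‖S θ‖ ^ 2 : ℝ) : ℂ) := by
      rw [Complex.mul_conj, Complex.normSq_eq_norm_sq]
    have e2 : deriv S θ * (starRingEnd ℂ) (deriv S θ)
        = ((‖deriv S θ‖ ^ 2 : ℝ) : ℂ) := by
      rw [Complex.mul_conj, Complex.normSq_eq_norm_sq]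
    have hr : Real.sin θ * ((m + s * Real.cos θ) ^ 2 / Real.sin θ ^ 2)
        = (m + s * Real.cos θ) ^ 2 / Real.sin θ := by
      field_simp
    have hrC : ((Real.sin θ : ℝ) : ℂ) * (((m + s * Real.cos θ) ^ 2 / Real.sin θ ^ 2 : ℝ) : ℂ)
        = (((m + s * Real.cos θ) ^ 2 / Real.sin θ : ℝ) : ℂ) := by
      rw [← Complex.ofReal_mul, hr]
    simp only [hg, hV, e1, e2, hf1, hf2, hf3, hf4, hf5]
    push_cast at hrC ⊢
    linear_combination ((‖S θ‖ : ℝ) : ℂ) ^ 2 * hrC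
  -- integrability of g
  have hsum_int : IntegrableOn (fun θ =>
      (f1 θ : ℂ) + (f2 θ : ℂ) + (-ν^2) * (f3 θ : ℂ) + (2*ν*s) * (f4 θ : ℂ)
        + (-lam) * (f5 θ : ℂ)) (Set.Ioo 0 π) := by
    exact ((((hL2'.ofReal.add hpot.ofReal).add (hf3i.ofReal.const_mul _)).add
      (hf4i.ofReal.const_mul _)).add (hL2.ofReal.const_mul _))
  have hgint : IntegrableOn g (Set.Ioo 0 π) := hsum_int.congr hgae.symm
  -- the integral identity via FTC and boundary limits
  set A : ℝ := ∫ θ in Set.Ioo 0 π, f1 θ with hA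
  set P : ℝ := ∫ θ in Set.Ioo 0 π, f2 θ with hP
  set B : ℝ := ∫ θ in Set.Ioo 0 π, f5 θ with hB
  set C : ℝ := ∫ θ in Set.Ioo 0 π, f3 θ with hC
  set D : ℝ := ∫ θ in Set.Ioo 0 π, f4 θ with hD
  have hint_eq : ∫ θ in Set.Ioo 0 π, g θ
      = (A : ℂ) + (P : ℂ) + (-ν^2) * (C : ℂ) + (2*ν*s) * (D : ℂ) + (-lam) * (B : ℂ) := by
    rw [integral_congr_ae hgae]
    have h1 : Integrable (fun θ : ℝ => (f1 θ : ℂ)) (volume.restrict (Set.Ioo 0 π)) :=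
      hL2'.ofReal (𝕜 := ℂ)
    have h2 : Integrable (fun θ : ℝ => (f2 θ : ℂ)) (volume.restrict (Set.Ioo 0 π)) :=
      hpot.ofReal (𝕜 := ℂ)
    have h3 : Integrable (fun θ : ℝ => (-ν^2) * (f3 θ : ℂ)) (volume.restrict (Set.Ioo 0 π)) :=
      (hf3i.ofReal (𝕜 := ℂ)).const_mul (-ν^2)
    have h4 : Integrable (fun θ : ℝ => (2*ν*(s:ℂ)) * (f4 θ : ℂ))
        (volume.restrict (Set.Ioo 0 π)) := (hf4i.ofReal (𝕜 := ℂ)).const_mul (2*ν*(s:ℂ))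
    have h5 : Integrable (fun θ : ℝ => (-lam) * (f5 θ : ℂ)) (volume.restrict (Set.Ioo 0 π)) :=
      (hL2.ofReal (𝕜 := ℂ)).const_mul (-lam)
    have H12 : Integrable (fun θ : ℝ => (f1 θ : ℂ) + (f2 θ : ℂ))
        (volume.restrict (Set.Ioo 0 π)) := h1.add h2
    have H123 : Integrable (fun θ : ℝ => (f1 θ : ℂ) + (f2 θ : ℂ) + (-ν^2) * (f3 θ : ℂ))
        (volume.restrict (Set.Ioo 0 π)) := H12.add h3
    have H1234 : Integrable (fun θ : ℝ => (f1 θ : ℂ) + (f2 θ : ℂ) + (-ν^2) * (f3 θ : ℂ)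
        + (2*ν*(s:ℂ)) * (f4 θ : ℂ)) (volume.restrict (Set.Ioo 0 π)) := H123.add h4
    rw [integral_add H1234 h5, integral_add H123 h4, integral_add H12 h3, integral_add h1 h2]
    simp only [integral_const_mul]
    have e1 : ∫ a in Set.Ioo 0 π, ((f1 a : ℝ) : ℂ) = (A : ℂ) := by
      rw [hA]; exact integral_ofReal
    have e2 : ∫ a in Set.Ioo 0 π, ((f2 a : ℝ) : ℂ) = (P : ℂ) := by
      rw [hP]; exact integral_ofReal
    have e3 : ∫ a in Set.Ioo 0 π, ((f3 a : ℝ) : ℂ) = (C : ℂ) := by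
      rw [hC]; exact integral_ofReal
    have e4 : ∫ a in Set.Ioo 0 π, ((f4 a : ℝ) : ℂ) = (D : ℂ) := by
      rw [hD]; exact integral_ofReal
    have e5 : ∫ a in Set.Ioo 0 π, ((f5 a : ℝ) : ℂ) = (B : ℂ) := by
      rw [hB]; exact integral_ofReal
    rw [e1, e2, e3, e4, e5]
  -- choose exhausting sequence
  set a : ℕ → ℝ := fun n => π / (n + 4) with ha
  set b : ℕ → ℝ := fun n => π - π / (n + 4) with hb
  have ha_pos : ∀ n, 0 < a n := fun n => by
    apply div_pos hπ; positivity
  have ha_small : ∀ n, a n < π / 2 := fun n => by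
    rw [ha, div_lt_div_iff₀ (by positivity) (by norm_num)]
    nlinarith [hπ, (Nat.cast_nonneg n : (0:ℝ) ≤ n)]
  have hab : ∀ n, a n < b n := fun n => by
    have := ha_small n; simp only [hb]; linarith
  have hb_lt : ∀ n, b n < π := fun n => by
    have := ha_pos n; simp only [hb]; linarith
  have hIcc_sub : ∀ n, Set.Icc (a n) (b n) ⊆ Set.Ioo 0 π := fun n x hx =>
    ⟨lt_of_lt_of_le (ha_pos n) hx.1, lt_of_le_of_lt hx.2 (hb_lt n)⟩
  have ha_anti : ∀ ⦃n k : ℕ⦄, n ≤ k → a k ≤ a n := fun n k hnk => by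
    apply div_le_div_of_nonneg_left hπ.le (by positivity)
    have : (n:ℝ) ≤ k := Nat.cast_le.mpr hnk
    linarith
  have hmono : Monotone (fun n => Set.Ioc (a n) (b n)) := by
    intro n k hnk
    apply Set.Ioc_subset_Ioc (ha_anti hnk)
    have := ha_anti hnk; simp only [hb]; linarith
  have hunion : (⋃ n, Set.Ioc (a n) (b n)) = Set.Ioo 0 π := by
    apply Set.Subset.antisymm
    · refine Set.iUnion_subset fun n x hx => ⟨(ha_pos n).trans hx.1, lt_of_le_of_lt hx.2 (hb_lt n)⟩
    · intro x hx
      have hmin : 0 < min x (π - x) := lt_min hx.1 (by linarith [hx.2])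
      obtain ⟨n, hn⟩ := exists_nat_gt (π / min x (π - x))
      refine Set.mem_iUnion.mpr ⟨n, ?_, ?_⟩
      · have h1 : π / ((n:ℝ) + 4) < min x (π - x) := by
          rw [div_lt_iff₀ (by positivity)]
          rw [div_lt_iff₀ hmin] at hn
          nlinarith [hmin]
        calc a n < min x (π - x) := h1
          _ ≤ x := min_le_left _ _
      · have h1 : π / ((n:ℝ) + 4) < min x (π - x) := by
          rw [div_lt_iff₀ (by positivity)]
          rw [div_lt_iff₀ hmin] at hn
          nlinarith [hmin]
        have h2 : π / ((n:ℝ) + 4) < π - x := h1.trans_le (min_le_right _ _)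
        simp only [hb]; linarith
  -- FTC on each [a n, b n]
  have hFTC : ∀ n, ∫ θ in Set.Ioc (a n) (b n), g θ = F (b n) - F (a n) := by
    intro n
    rw [← intervalIntegral.integral_of_le (hab n).le]
    apply intervalIntegral.integral_eq_sub_of_hasDerivAt
    · intro θ hθ
      rw [Set.uIcc_of_le (hab n).le] at hθ
      exact hFderiv θ (hIcc_sub n hθ)
    · apply ContinuousOn.intervalIntegrable
      rw [Set.uIcc_of_le (hab n).le]
      exact hgcont.mono (hIcc_sub n)
  -- limits
  have hta : Tendsto a atTop (nhdsWithin 0 (Set.Ioi 0)) := by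
    rw [tendsto_nhdsWithin_iff]
    constructor
    · have : Tendsto (fun n : ℕ => ((n:ℝ) + 4)) atTop atTop :=
        tendsto_atTop_add_const_right _ _ tendsto_natCast_atTop_atTop
      simpa [ha] using Tendsto.div_atTop (tendsto_const_nhds (x := π)) this
    · exact Filter.Eventually.of_forall fun n => ha_pos n
  have htb : Tendsto b atTop (nhdsWithin π (Set.Iio π)) := by
    rw [tendsto_nhdsWithin_iff]
    constructor
    · have h0 : Tendsto a atTop (nhds 0) := by
        have : Tendsto (fun n : ℕ => ((n:ℝ) + 4)) atTop atTop :=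
          tendsto_atTop_add_const_right _ _ tendsto_natCast_atTop_atTop
        simpa [ha] using Tendsto.div_atTop (tendsto_const_nhds (x := π)) this
      have := (tendsto_const_nhds (x := π) (f := atTop (α := ℕ))).sub h0
      simpa [hb, ha] using this
    · exact Filter.Eventually.of_forall fun n => hb_lt n
  have hflux : Tendsto (fun n => F (b n) - F (a n)) atTop (nhds 0) := by
    have h1 : Tendsto (fun n => F (b n)) atTop (nhds 0) := hbπ.comp htb
    have h2 : Tendsto (fun n => F (a n)) atTop (nhds 0) := hb0.comp hta
    simpa using h1.sub h2
  have hlim : Tendsto (fun n => ∫ θ in Set.Ioc (a n) (b n), g θ) atTop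
      (nhds (∫ θ in Set.Ioo 0 π, g θ)) := by
    have := tendsto_setIntegral_of_monotone (fun n => measurableSet_Ioc) hmono
      (hunion ▸ hgint)
    rwa [hunion] at this
  have hzero : ∫ θ in Set.Ioo 0 π, g θ = 0 := by
    apply tendsto_nhds_unique hlim
    exact hflux.congr fun n => (hFTC n).symm
  have heq : (A : ℂ) + (P : ℂ) + (-ν^2) * (C : ℂ) + (2*ν*s) * (D : ℂ) + (-lam) * (B : ℂ)
      = 0 := by rw [← hint_eq]; exact hzero
  -- nonnegativity and positivity
  have hAnn : 0 ≤ A := setIntegral_nonneg measurableSet_Ioo fun θ hθ =>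
    mul_nonneg (sq_nonneg _) (Real.sin_pos_of_pos_of_lt_pi hθ.1 hθ.2).le
  have hPnn : 0 ≤ P := setIntegral_nonneg measurableSet_Ioo fun θ hθ =>
    div_nonneg (mul_nonneg (sq_nonneg _) (sq_nonneg _))
      (Real.sin_pos_of_pos_of_lt_pi hθ.1 hθ.2).le
  -- a ball around θ₀ where S ≠ 0
  obtain ⟨θ₀, hθ₀, hSθ₀⟩ := hne
  have hScont : ContinuousAt S θ₀ := hSc.continuousAt (isOpen_Ioo.mem_nhds hθ₀)
  have hU : {x : ℝ | S x ≠ 0} ∩ Set.Ioo 0 π ∈ nhds θ₀ := by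
    apply Filter.inter_mem
    · exact hScont.preimage_mem_nhds (isOpen_ne.mem_nhds hSθ₀)
    · exact isOpen_Ioo.mem_nhds hθ₀
  obtain ⟨ε, hε, hball⟩ := Metric.mem_nhds_iff.mp hU
  have hball' : Set.Ioo (θ₀ - ε) (θ₀ + ε) ⊆ {x : ℝ | S x ≠ 0} ∩ Set.Ioo 0 π := by
    rw [← Real.ball_eq_Ioo]; exact hball
  have hBpos : 0 < B := by
    rw [hB, setIntegral_pos_iff_support_of_nonneg_ae _ hL2]
    · apply lt_of_lt_of_le _ (measure_mono (show Set.Ioo (θ₀ - ε) (θ₀ + ε) ⊆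
        Function.support f5 ∩ Set.Ioo 0 π from ?_))
      · rw [Real.volume_Ioo]
        simp only [ENNReal.ofReal_pos]; linarith
      · intro x hx
        obtain ⟨hx1, hx2⟩ := hball' hx
        refine ⟨?_, hx2⟩
        simp only [Function.mem_support, hf5]
        have h1 : ‖S x‖ ≠ 0 := norm_ne_zero_iff.mpr hx1
        have h2 : 0 < Real.sin x := Real.sin_pos_of_pos_of_lt_pi hx2.1 hx2.2
        positivity
    · filter_upwards [ae_restrict_mem measurableSet_Ioo] with θ hθ
      exact hf5nonneg θ hθ
  have hCpos : 0 < C := by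
    rw [hC, setIntegral_pos_iff_support_of_nonneg_ae _ hf3i]
    · apply lt_of_lt_of_le _ (measure_mono (show Set.Ioo (θ₀ - ε) (θ₀ + ε) \ {π/2} ⊆
        Function.support f3 ∩ Set.Ioo 0 π from ?_))
      · rw [measure_diff_null (measure_singleton _), Real.volume_Ioo]
        simp only [ENNReal.ofReal_pos]; linarith
      · rintro x ⟨hx, hxhalf⟩
        obtain ⟨hx1, hx2⟩ := hball' hx
        refine ⟨?_, hx2⟩
        simp only [Function.mem_support, hf3, hf5]
        have h1 : ‖S x‖ ≠ 0 := norm_ne_zero_iff.mpr hx1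
        have h2 : 0 < Real.sin x := Real.sin_pos_of_pos_of_lt_pi hx2.1 hx2.2
        have h3 : Real.cos x ≠ 0 := by
          intro hcos
          rw [Real.cos_eq_zero_iff] at hcos
          obtain ⟨n, hn⟩ := hcos
          apply hxhalf
          simp only [Set.mem_singleton_iff]
          have hn0 : n = 0 := by
            by_contra hne0
            rcases lt_or_gt_of_ne hne0 with h | h
            · have h1 : (n:ℝ) ≤ -1 := by exact_mod_cast (by omega : n ≤ -1)
              nlinarith [hx2.1, hx2.2, hπ]
            · have h1 : (1:ℝ) ≤ (n:ℝ) := by exact_mod_cast (by omega : 1 ≤ n)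
              nlinarith [hx2.1, hx2.2, hπ]
          rw [hn0] at hn; push_cast at hn; linarith
        positivity
    · filter_upwards [ae_restrict_mem measurableSet_Ioo] with θ hθ
      exact mul_nonneg (sq_nonneg _) (hf5nonneg θ hθ)
  -- extract real and imaginary parts
  have hre := congrArg Complex.re heq
  have him := congrArg Complex.im heq
  simp only [Complex.add_re, Complex.add_im, Complex.mul_re, Complex.mul_im,
    Complex.neg_re, Complex.neg_im, Complex.ofReal_re, Complex.ofReal_im,
    Complex.zero_re, Complex.zero_im, pow_two, Complex.re_ofNat, Complex.im_ofNat,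
    mul_zero, zero_mul, sub_zero, zero_sub, add_zero, zero_add, mul_one, neg_neg,
    neg_zero] at hre him
  have hgoal : ((starRingEnd ℂ) ν * lam).im = ν.re * lam.im - ν.im * lam.re := by
    simp [Complex.mul_im, Complex.conj_re, Complex.conj_im]; ring
  rw [hgoal]
  have key : (ν.re * lam.im - ν.im * lam.re) * B
      = -ν.im * (A + P) - ν.im * (ν.re^2 + ν.im^2) * C := by
    linear_combination ν.im * hre - ν.re * him
  nlinarith [key, hBpos, hCpos, hAnn, hPnn, hν,
    mul_pos (mul_pos (mul_pos hν hν) hν) hCpos,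
    mul_nonneg (mul_nonneg hν.le (sq_nonneg ν.re)) hCpos.le,
    mul_nonneg hν.le (add_nonneg hAnn hPnn)]
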